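/- arXiv:2305.16747 — 2 statements merged into one kernel-verified Lean document; each statement's English description precedes it below -/
import Mathlib

section
/- Let R be a commutative ring and d : R → R a derivation. Let P = (P_1,…,P_m) be an m-tuple of polynomials in R[x_1,…,x_n] and Q = (Q_1,…,Q_r) an r-tuple of polynomials in R[y_1,…,y_m], and let Q∘P denote the r-tuple of polynomials in R[x_1,…,x_n] obtained by substituting P_j for y_j in each Q_l. For an m-tuple P define the prolongation map τP : R^n × R^n → R^m × R^m by τP(a,u) = ( P(a), JP(a)·u + P^d(a) ), where JP(a) is the Jacobian matrix of formal partial derivatives of P evaluated at a, JP(a)·u is matrix–vector multiplication, and P^d(a) = (P_1^d(a),…,P_m^d(a)). Then for all a, u ∈ R^n, τ(Q∘P)(a,u) = τQ( τP(a,u) ). -/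
open MvPolynomial

/-- `coeffD d p` is the polynomial `p^d` obtained from `p` by applying `d` to each
coefficient. -/
noncomputable def coeffD {R : Type*} [CommRing R] {σ : Type*} (d : R → R)
    (p : MvPolynomial σ R) : MvPolynomial σ R :=
  ∑ s ∈ p.support, monomial s (d (coeff s p))

/-- The prolongation `τP : R^n × R^n → R^m × R^m` of an `m`-tuple `P` of polynomials
in `n` variables: `τP(a,u) = (P(a), JP(a)·u + P^d(a))`, where `JP(a)` is the Jacobian
of formal partial derivatives evaluated at `a`. -/
noncomputable def tauPoly {R : Type*} [CommRing R] {n m : ℕ} (d : R → R)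
    (P : Fin m → MvPolynomial (Fin n) R) :
    (Fin n → R) × (Fin n → R) → (Fin m → R) × (Fin m → R) :=
  fun au =>
    (fun j => eval au.1 (P j),
     fun j => (∑ i, eval au.1 (pderiv i (P j)) * au.2 i) + eval au.1 (coeffD d (P j)))

section Aux

variable {R : Type*} [CommRing R] {σ : Type*} (d : R → R)
  (hadd : ∀ x y, d (x + y) = d x + d y)
  (hmul : ∀ x y, d (x * y) = d x * y + x * d y)

include hadd

lemma tau_d_zero : d 0 = 0 := by
  have := hadd 0 0; simpa using this.symm

lemma coeff_coeffD (p : MvPolynomial σ R) (t : σ →₀ ℕ) :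
    coeff t (coeffD d p) = d (coeff t p) := by
  classical
  rw [coeffD, coeff_sum]
  simp only [coeff_monomial]
  rw [Finset.sum_ite_eq' p.support t (fun s => d (coeff s p))]
  split_ifs with h
  · rfl
  · rw [notMem_support_iff.mp h, tau_d_zero d hadd]

lemma coeffD_add (p q : MvPolynomial σ R) :
    coeffD d (p + q) = coeffD d p + coeffD d q := by
  ext t
  simp [coeff_coeffD d hadd, hadd]

lemma coeffD_C (r : R) : coeffD d (C r : MvPolynomial σ R) = C (d r) := by
  classical
  ext t
  rw [coeff_coeffD d hadd]
  simp only [coeff_C]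
  split_ifs with h
  · rfl
  · exact tau_d_zero d hadd

include hmul

lemma coeffD_mul (p q : MvPolynomial σ R) :
    coeffD d (p * q) = coeffD d p * q + p * coeffD d q := by
  classical
  ext t
  rw [coeff_coeffD d hadd, coeff_add, coeff_mul, coeff_mul, coeff_mul]
  have : ∀ x ∈ Finset.HasAntidiagonal.antidiagonal t, True := fun _ _ => trivial
  rw [show d (∑ x ∈ Finset.HasAntidiagonal.antidiagonal t, coeff x.1 p * coeff x.2 q)
      = ∑ x ∈ Finset.HasAntidiagonal.antidiagonal t, d (coeff x.1 p * coeff x.2 q) from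
    map_sum (AddMonoidHom.mk' d hadd) _ _]
  rw [← Finset.sum_add_distrib]
  refine Finset.sum_congr rfl fun x _ => ?_
  rw [hmul, coeff_coeffD d hadd, coeff_coeffD d hadd]

lemma coeffD_X [DecidableEq σ] (i : σ) : coeffD d (X i : MvPolynomial σ R) = 0 := by
  have h1 : d 1 = 0 := by
    have := hmul 1 1
    simpa using this.symm
  ext t
  rw [coeff_coeffD d hadd]
  simp only [coeff_X', coeff_zero]
  split_ifs with h
  · exact h1
  · exact tau_d_zero d hadd

end Aux

section Key

variable {R : Type*} [CommRing R] {n m : ℕ} (d : R → R)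
  (hadd : ∀ x y, d (x + y) = d x + d y)
  (hmul : ∀ x y, d (x * y) = d x * y + x * d y)
  (a u : Fin n → R)

lemma tau_eval_bind₁ {σ τ : Type*} (g : τ → R) (f : σ → MvPolynomial τ R)
    (φ : MvPolynomial σ R) :
    eval g (bind₁ f φ) = eval (fun i => eval g (f i)) φ :=
  eval₂Hom_bind₁ _ _ _ _

/-- The "derivative part" of the prolongation, as a function of the polynomial. -/
noncomputable def tauDelta (p : MvPolynomial (Fin n) R) : R :=
  (∑ i, eval a (pderiv i p) * u i) + eval a (coeffD d p)

include hadd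

lemma tauDelta_add (p q : MvPolynomial (Fin n) R) :
    tauDelta d a u (p + q) = tauDelta d a u p + tauDelta d a u q := by
  simp only [tauDelta, map_add, coeffD_add d hadd, add_mul, Finset.sum_add_distrib]
  ring

lemma tauDelta_C (r : R) : tauDelta d a u (C r) = d r := by
  simp [tauDelta, pderiv_C, coeffD_C d hadd]

include hmul

lemma tauDelta_mul (p q : MvPolynomial (Fin n) R) :
    tauDelta d a u (p * q) =
      tauDelta d a u p * eval a q + eval a p * tauDelta d a u q := by
  simp only [tauDelta]
  have hsum : (∑ i, eval a (pderiv i (p * q)) * u i)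
      = (∑ i, eval a (pderiv i p) * u i) * eval a q
        + eval a p * (∑ i, eval a (pderiv i q) * u i) := by
    rw [Finset.sum_mul, Finset.mul_sum, ← Finset.sum_add_distrib]
    exact Finset.sum_congr rfl fun i _ => by
      rw [pderiv_mul, map_add, map_mul, map_mul]; ring
  rw [hsum, coeffD_mul d hadd hmul, map_add, map_mul, map_mul]
  ring

lemma tauDelta_key (P : Fin m → MvPolynomial (Fin n) R) (Q : MvPolynomial (Fin m) R) :
    tauDelta d a u (bind₁ P Q) =
      (∑ j, eval (fun j => eval a (P j)) (pderiv j Q) * tauDelta d a u (P j))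
        + eval (fun j => eval a (P j)) (coeffD d Q) := by
  classical
  set b : Fin m → R := fun j => eval a (P j) with hb
  induction Q using MvPolynomial.induction_on with
  | C r =>
      simp [tauDelta_C d hadd a u, coeffD_C d hadd]
  | add p q hp hq =>
      rw [map_add, tauDelta_add d hadd a u, hp, hq, coeffD_add d hadd, map_add,
        show (∑ j, eval b (pderiv j (p + q)) * tauDelta d a u (P j))
          = ∑ j, (eval b (pderiv j p) * tauDelta d a u (P j)
              + eval b (pderiv j q) * tauDelta d a u (P j)) from
        Finset.sum_congr rfl fun j _ => by rw [map_add, map_add]; ring,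
        Finset.sum_add_distrib]
      ring
  | mul_X p j hp =>
      have hS : ∀ j' : Fin m,
          eval b (pderiv j' (X j : MvPolynomial (Fin m) R)) = if j' = j then 1 else 0 := by
        intro j'
        by_cases h : j' = j
        · subst h; simp
        · rw [pderiv_X_of_ne (Ne.symm h)]; simp [h]
      have hterm : ∀ j' : Fin m, eval b (pderiv j' (p * X j)) * tauDelta d a u (P j')
          = eval b (pderiv j' p) * tauDelta d a u (P j') * eval a (P j)
            + eval b p * (if j' = j then tauDelta d a u (P j') else 0) := by
        intro j'
        rw [pderiv_mul, map_add, map_mul, map_mul, hS j', eval_X]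
        split_ifs <;> simp [hb] <;> ring
      rw [map_mul, bind₁_X_right, tauDelta_mul d hadd hmul a u, hp,
        coeffD_mul d hadd hmul, coeffD_X d hadd hmul, mul_zero, add_zero,
        map_mul, tau_eval_bind₁,
        Finset.sum_congr rfl fun j' _ => hterm j', Finset.sum_add_distrib,
        ← Finset.mul_sum, Finset.sum_ite_eq' Finset.univ j (fun j' => tauDelta d a u (P j')),
        ← Finset.sum_mul]
      simp only [Finset.mem_univ, if_true, eval_X, ← hb]
      ring

end Key

/-- Chain rule for prolongations of polynomial maps: `τ(Q ∘ P) = τQ ∘ τP`, where the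
composite tuple `Q ∘ P` is obtained by substituting `P_j` for `y_j` in each `Q_l`. -/
theorem tauPoly_comp {R : Type*} [CommRing R] {n m r : ℕ} (d : R → R)
    (hadd : ∀ x y, d (x + y) = d x + d y)
    (hmul : ∀ x y, d (x * y) = d x * y + x * d y)
    (P : Fin m → MvPolynomial (Fin n) R) (Q : Fin r → MvPolynomial (Fin m) R)
    (a u : Fin n → R) :
    tauPoly d (fun l => bind₁ P (Q l)) (a, u) = tauPoly d Q (tauPoly d P (a, u)) := by
  simp only [tauPoly]
  refine Prod.ext ?_ ?_
  · funext l
    exact tau_eval_bind₁ a P (Q l)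
  · funext l
    have h := tauDelta_key d hadd hmul a u P (Q l)
    simpa [tauDelta] using h
end

section
/- Let p be a prime and work over the field ℚ_p of p-adic numbers with its standard norm; equip ℚ_p^k with the sup norm ‖x‖ = max_i ‖x_i‖ and matrices with entrywise sup norm. Let b ∈ ℚ_p^n, let g : ℚ_p^m × ℚ_p^n → ℚ_p^r be a function, and let A : ℚ_p^n → M_{r×m}(ℚ_p) be a matrix-valued function continuous at b. Assume that for every real ε > 0 there exists δ > 0 such that for all x ∈ ℚ_p^m and y ∈ ℚ_p^n with ‖x‖ < δ and ‖y − b‖ < δ one has ‖g(x,y) − A(y)·x‖ ≤ ε·‖x‖. Then for every real ε > 0 there exists δ > 0 such that for all (x,y) with max(‖x‖, ‖y − b‖) < δ one has ‖g(x,y) − A(b)·x‖ ≤ ε·max(‖x‖, ‖y − b‖); in other words, g is differentiable at (0,b) with derivative (x,y) ↦ A(b)·x. -/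
open Matrix

/-- p-adic differentiability of a function of two blocks of variables at `(0, b)`:
if `g` satisfies `‖g(x,y) − A(y)·x‖ ≤ ε‖x‖` for `‖x‖, ‖y − b‖` small, where the
matrix-valued map `A` is continuous at `b` (entrywise), then `g` is differentiable at
`(0,b)` with derivative `(x,y) ↦ A(b)·x`: for every `ε > 0` there is `δ > 0` such
that `max(‖x‖, ‖y−b‖) < δ` implies `‖g(x,y) − A(b)·x‖ ≤ ε·max(‖x‖, ‖y−b‖)`.
Here `ℚ_p^k` carries the sup norm. -/
theorem padic_differentiable_at_generic (p : ℕ) [Fact p.Prime] {m n r : ℕ}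
    (b : Fin n → ℚ_[p])
    (g : (Fin m → ℚ_[p]) × (Fin n → ℚ_[p]) → Fin r → ℚ_[p])
    (A : (Fin n → ℚ_[p]) → Matrix (Fin r) (Fin m) ℚ_[p])
    (hA : ∀ i j, ContinuousAt (fun y => A y i j) b)
    (hg : ∀ ε : ℝ, 0 < ε → ∃ δ : ℝ, 0 < δ ∧
      ∀ (x : Fin m → ℚ_[p]) (y : Fin n → ℚ_[p]), ‖x‖ < δ → ‖y - b‖ < δ →
        ‖g (x, y) - A y *ᵥ x‖ ≤ ε * ‖x‖) :
    ∀ ε : ℝ, 0 < ε → ∃ δ : ℝ, 0 < δ ∧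
      ∀ (x : Fin m → ℚ_[p]) (y : Fin n → ℚ_[p]), max ‖x‖ ‖y - b‖ < δ →
        ‖g (x, y) - A b *ᵥ x‖ ≤ ε * max ‖x‖ ‖y - b‖ := by
  intro ε hε
  set ε' : ℝ := ε / (2 * (m + 1)) with hε'def
  have hε' : 0 < ε' := by positivity
  obtain ⟨δ1, hδ1, H1⟩ := hg (ε / 2) (by positivity)
  have h2 : ∀ᶠ y in nhds b, ∀ i j, ‖A y i j - A b i j‖ ≤ ε' := by
    refine Filter.eventually_all.2 fun i => Filter.eventually_all.2 fun j => ?_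
    have := Metric.tendsto_nhds.mp (hA i j) ε' hε'
    filter_upwards [this] with y hy
    rw [dist_eq_norm] at hy
    exact hy.le
  obtain ⟨δ2, hδ2, H2⟩ := Metric.eventually_nhds_iff.mp h2
  refine ⟨min δ1 δ2, lt_min hδ1 hδ2, ?_⟩
  intro x y hxy
  have hx : ‖x‖ < δ1 := lt_of_le_of_lt (le_max_left _ _) (hxy.trans_le (min_le_left _ _))
  have hy1 : ‖y - b‖ < δ1 := lt_of_le_of_lt (le_max_right _ _) (hxy.trans_le (min_le_left _ _))
  have hy2 : dist y b < δ2 := by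
    rw [dist_eq_norm]
    exact lt_of_le_of_lt (le_max_right _ _) (hxy.trans_le (min_le_right _ _))
  have hAyb := H2 hy2
  have key1 := H1 x y hx hy1
  have key2 : ‖(A y - A b) *ᵥ x‖ ≤ (m : ℝ) * ε' * ‖x‖ := by
    have hnn : (0:ℝ) ≤ (m : ℝ) * ε' * ‖x‖ := by positivity
    rw [pi_norm_le_iff_of_nonneg hnn]
    intro i
    have : ((A y - A b) *ᵥ x) i = ∑ j, (A y i j - A b i j) * x j := by
      simp [Matrix.mulVec, dotProduct, Matrix.sub_apply]
    rw [this]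
    calc ‖∑ j, (A y i j - A b i j) * x j‖ ≤ ∑ j, ‖(A y i j - A b i j) * x j‖ :=
          norm_sum_le _ _
      _ ≤ ∑ _j : Fin m, ε' * ‖x‖ := by
          refine Finset.sum_le_sum fun j _ => ?_
          rw [norm_mul]
          exact mul_le_mul (hAyb i j) (norm_le_pi_norm x j) (norm_nonneg _) hε'.le
      _ = (m : ℝ) * ε' * ‖x‖ := by simp [Finset.sum_const, mul_assoc]
  have hmε : (m : ℝ) * ε' ≤ ε / 2 := by
    rw [hε'def, mul_div_assoc', div_le_div_iff₀ (by positivity) (by norm_num : (0:ℝ) < 2)]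
    nlinarith [hε.le, Nat.cast_nonneg (α := ℝ) m]
  calc ‖g (x, y) - A b *ᵥ x‖
      = ‖(g (x, y) - A y *ᵥ x) + (A y - A b) *ᵥ x‖ := by
        rw [Matrix.sub_mulVec]; ring_nf
    _ ≤ ‖g (x, y) - A y *ᵥ x‖ + ‖(A y - A b) *ᵥ x‖ := norm_add_le _ _
    _ ≤ ε / 2 * ‖x‖ + (m : ℝ) * ε' * ‖x‖ := add_le_add key1 key2
    _ ≤ ε * ‖x‖ := by nlinarith [norm_nonneg x]
    _ ≤ ε * max ‖x‖ ‖y - b‖ := by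
        exact mul_le_mul_of_nonneg_left (le_max_left _ _) hε.le
end
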